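/- arXiv:2104.08047 — 3 statements merged into one kernel-verified Lean document; each statement's English description precedes it below -/
import Mathlib

section
/- Fix g ∈ ℂ^n \ {0}, positive semidefinite Hermitian A₁,…,A_K, and Hermitian positive definite F. The interference function I(η) = 1 / (g^H (Σ_i η_i A_i + F)^{-1} g) satisfies the scalability property: for every t > 1 and η ∈ ℝ_{≥0}^K, I(t·η) < t·I(η). -/
open Matrix ComplexOrder

private lemma herm_shift {n : ℕ} {H : Matrix (Fin n) (Fin n) ℂ} (hH : H.IsHermitian)
    (x y : Fin n → ℂ) : star x ⬝ᵥ H *ᵥ y = star (H *ᵥ x) ⬝ᵥ y := by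
  rw [star_mulVec, hH.eq, ← dotProduct_mulVec]

private lemma psd_smul {n : ℕ} {c : ℝ} (hc : 0 ≤ c) {A : Matrix (Fin n) (Fin n) ℂ}
    (hA : A.PosSemidef) : ((c : ℂ) • A).PosSemidef := by
  refine posSemidef_iff_dotProduct_mulVec.mpr ⟨?_, fun x => ?_⟩
  · unfold Matrix.IsHermitian
    rw [conjTranspose_smul, hA.1.eq]
    simp
  · rw [smul_mulVec, dotProduct_smul]
    exact mul_nonneg (by exact_mod_cast hc) (hA.dotProduct_mulVec_nonneg x)

private lemma pd_smul {n : ℕ} {c : ℝ} (hc : 0 < c) {A : Matrix (Fin n) (Fin n) ℂ}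
    (hA : A.PosDef) : ((c : ℂ) • A).PosDef := by
  refine posDef_iff_dotProduct_mulVec.mpr ⟨?_, fun x hx => ?_⟩
  · unfold Matrix.IsHermitian
    rw [conjTranspose_smul, hA.1.eq]
    simp
  · rw [smul_mulVec, dotProduct_smul]
    have h1 : (0:ℂ) < (c : ℂ) := by rwa [Complex.zero_lt_real]
    exact mul_pos h1 (hA.dotProduct_mulVec_pos hx)

private lemma my_sum_mulVec {n K : ℕ} (M : Fin K → Matrix (Fin n) (Fin n) ℂ) (x : Fin n → ℂ) :
    (∑ i, M i) *ᵥ x = ∑ i, M i *ᵥ x := by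
  ext j
  simp only [Matrix.mulVec, dotProduct, Matrix.sum_apply, Finset.sum_apply,
    Finset.sum_mul]
  exact Finset.sum_comm

private lemma my_dot_sum {n K : ℕ} (M : Fin K → Matrix (Fin n) (Fin n) ℂ) (x : Fin n → ℂ) :
    star x ⬝ᵥ (∑ i, M i) *ᵥ x = ∑ i, star x ⬝ᵥ (M i *ᵥ x) := by
  rw [my_sum_mulVec]
  simp only [dotProduct, Finset.sum_apply, Finset.mul_sum]
  exact Finset.sum_comm

private lemma psd_sum {n K : ℕ} (c : Fin K → ℝ) (hc : ∀ i, 0 ≤ c i)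
    (A : Fin K → Matrix (Fin n) (Fin n) ℂ) (hA : ∀ i, (A i).PosSemidef) :
    (∑ i, ((c i : ℂ)) • A i).PosSemidef := by
  refine posSemidef_iff_dotProduct_mulVec.mpr ⟨?_, fun x => ?_⟩
  · unfold Matrix.IsHermitian
    rw [conjTranspose_sum]
    refine Finset.sum_congr rfl fun i _ => ?_
    rw [conjTranspose_smul, (hA i).1.eq]
    simp
  · rw [my_dot_sum]
    refine Finset.sum_nonneg fun i _ => ?_
    rw [smul_mulVec, dotProduct_smul]
    exact mul_nonneg (by exact_mod_cast hc i) ((hA i).dotProduct_mulVec_nonneg x)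

/-- Scalability of the interference function `I(η) = 1 / (gᴴ (Σᵢ ηᵢ Aᵢ + F)⁻¹ g)`:
for every `t > 1` and `η ∈ ℝ≥0^K`, `I(t·η) < t·I(η)`. -/
theorem stmt7 {n K : ℕ} (g : Fin n → ℂ) (hg : g ≠ 0)
    (A : Fin K → Matrix (Fin n) (Fin n) ℂ) (hA : ∀ i, (A i).PosSemidef)
    (F : Matrix (Fin n) (Fin n) ℂ) (hF : F.PosDef)
    (η : Fin K → ℝ) (hη : ∀ i, 0 ≤ η i) (t : ℝ) (ht : 1 < t) :
    1 / (star g ⬝ᵥ ((∑ i, ((t * η i : ℝ) : ℂ) • A i) + F)⁻¹.mulVec g).re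
      < t * (1 / (star g ⬝ᵥ ((∑ i, (η i : ℂ) • A i) + F)⁻¹.mulVec g).re) := by
  have ht0 : (0:ℝ) < t := lt_trans one_pos ht
  set M : Matrix (Fin n) (Fin n) ℂ := (∑ i, (η i : ℂ) • A i) + F with hMdef
  set N : Matrix (Fin n) (Fin n) ℂ := (∑ i, ((t * η i : ℝ) : ℂ) • A i) + F with hNdef
  have hM : M.PosDef := Matrix.PosDef.posSemidef_add (psd_sum η hη A hA) hF
  have hN : N.PosDef := Matrix.PosDef.posSemidef_add
    (psd_sum (fun i => t * η i) (fun i => mul_nonneg ht0.le (hη i)) A hA) hF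
  have hD : ((((t - 1 : ℝ)) : ℂ) • F).PosDef := pd_smul (by linarith) hF
  set D : Matrix (Fin n) (Fin n) ℂ := (((t - 1 : ℝ)) : ℂ) • F with hDdef
  -- key matrix identity : N + D = t • M
  have hkey : N + D = (t : ℂ) • M := by
    rw [hNdef, hDdef, hMdef, smul_add, Finset.smul_sum]
    have h1 : ∀ i, ((t * η i : ℝ) : ℂ) • A i = (t:ℂ) • ((η i : ℂ) • A i) := by
      intro i; rw [smul_smul]; push_cast; ring_nf
    rw [Finset.sum_congr rfl (fun i _ => h1 i)]
    have h2 : ((t - 1 : ℝ) : ℂ) • F = (t:ℂ) • F - F := by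
      push_cast; rw [sub_smul, one_smul]
    rw [h2]; abel
  -- vectors
  set u : Fin n → ℂ := N⁻¹ *ᵥ g with hudef
  set y : Fin n → ℂ := ((t⁻¹ : ℝ) : ℂ) • (M⁻¹ *ᵥ g) with hydef
  have hNN : N * N⁻¹ = 1 := Matrix.mul_nonsing_inv N ((Matrix.isUnit_iff_isUnit_det N).mp hN.isUnit)
  have hNu : N *ᵥ u = g := by
    rw [hudef, mulVec_mulVec, hNN, one_mulVec]
  have hMinvg : M *ᵥ (M⁻¹ *ᵥ g) = g := by
    rw [mulVec_mulVec, Matrix.mul_nonsing_inv M ((Matrix.isUnit_iff_isUnit_det M).mp hM.isUnit),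
      one_mulVec]
  have hQy : N *ᵥ y + D *ᵥ y = g := by
    have h3 : (N + D) *ᵥ y = g := by
      rw [hkey, hydef, smul_mulVec, mulVec_smul, smul_smul]
      have h4 : (t:ℂ) * ((t⁻¹ : ℝ) : ℂ) = 1 := by
        push_cast; field_simp
      rw [h4, one_smul, hMinvg]
    rwa [add_mulVec] at h3
  have hy0 : y ≠ 0 := by
    intro h
    have ht' : ((t⁻¹ : ℝ) : ℂ) ≠ 0 := by
      simp only [ne_eq, Complex.ofReal_eq_zero]
      exact inv_ne_zero ht0.ne'
    have h1 : M⁻¹ *ᵥ g = 0 := by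
      rw [hydef] at h
      exact (smul_eq_zero.mp h).resolve_left ht'
    apply hg
    rw [← hMinvg, h1, mulVec_zero]
  set w : Fin n → ℂ := y - u with hwdef
  -- master identity
  have master : star g ⬝ᵥ u = star w ⬝ᵥ (N *ᵥ w) + star y ⬝ᵥ (D *ᵥ y) + star g ⬝ᵥ y := by
    have hNy : N *ᵥ y = g - D *ᵥ y := by rw [← hQy]; abel
    have e1 : star w ⬝ᵥ (N *ᵥ w) = - (star y ⬝ᵥ (D *ᵥ y)) + star u ⬝ᵥ (D *ᵥ y) := by
      have h5 : N *ᵥ w = - (D *ᵥ y) := by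
        rw [hwdef, mulVec_sub, hNy, hNu]; abel
      rw [h5, hwdef, star_sub, dotProduct_neg, sub_dotProduct]
      ring
    have e2 : star u ⬝ᵥ (D *ᵥ y) = star g ⬝ᵥ u - star g ⬝ᵥ y := by
      have h3 : star u ⬝ᵥ (N *ᵥ y) = star g ⬝ᵥ y := by
        rw [herm_shift hN.isHermitian, hNu]
      have h4 : star u ⬝ᵥ g = star g ⬝ᵥ u := by
        rw [hudef, ← herm_shift (hN.isHermitian.inv) g g]
      have h6 : D *ᵥ y = g - N *ᵥ y := by rw [← hQy]; abel
      rw [h6, dotProduct_sub, h3, h4]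
    rw [e1, e2]; ring
  -- positivity
  have hq1 : 0 ≤ star w ⬝ᵥ (N *ᵥ w) := hN.posSemidef.dotProduct_mulVec_nonneg w
  have hq2 : 0 < star y ⬝ᵥ (D *ᵥ y) := hD.dotProduct_mulVec_pos hy0
  have hlt : star g ⬝ᵥ y < star g ⬝ᵥ u := by
    rw [master]
    exact lt_add_of_pos_left _ (add_pos_of_nonneg_of_pos hq1 hq2)
  have hyval : star g ⬝ᵥ y = ((t⁻¹ : ℝ) : ℂ) * (star g ⬝ᵥ (M⁻¹ *ᵥ g)) := by
    rw [hydef, dotProduct_smul, smul_eq_mul]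
  -- pass to real parts
  have hb : 0 < (star g ⬝ᵥ (M⁻¹ *ᵥ g)).re := by
    have := hM.inv.re_dotProduct_pos hg
    simpa using this
  have ha : t⁻¹ * (star g ⬝ᵥ (M⁻¹ *ᵥ g)).re < (star g ⬝ᵥ u).re := by
    have h7 := (Complex.lt_def.mp hlt).1
    rwa [hyval, Complex.re_ofReal_mul] at h7
  have ha0 : 0 < (star g ⬝ᵥ u).re := lt_trans (by positivity) ha
  set a : ℝ := (star g ⬝ᵥ u).re
  set b : ℝ := (star g ⬝ᵥ (M⁻¹ *ᵥ g)).re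
  show 1 / a < t * (1 / b)
  rw [mul_one_div, div_lt_div_iff₀ ha0 hb, one_mul]
  calc b = t * (t⁻¹ * b) := by field_simp
    _ < t * a := by exact (mul_lt_mul_iff_right₀ ht0).mpr ha
end

section
/- Let T : ℝ_{≥0}^K → ℝ_{>0}^K be a standard interference mapping, i.e., each component T_k is positive, monotone (η ≤ η' ⟹ T(η) ≤ T(η')), and scalable (t > 1 ⟹ T(tη) < tT(η) componentwise). If T has a fixed point η*, then the fixed point is unique. -/
private lemma aux10 {K : ℕ} (T : (Fin K → ℝ) → (Fin K → ℝ))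
    (hmono : ∀ η η', (∀ i, 0 ≤ η i) → (∀ i, 0 ≤ η' i) → η ≤ η' → T η ≤ T η')
    (hscal : ∀ t : ℝ, 1 < t → ∀ η, (∀ i, 0 ≤ η i) → ∀ k, T (t • η) k < t * T η k)
    (ηs ηs' : Fin K → ℝ) (h1 : ∀ i, 0 < ηs i) (h2 : ∀ i, 0 ≤ ηs' i)
    (hf1 : T ηs = ηs) (hf2 : T ηs' = ηs') : ηs' ≤ ηs := by
  rcases Nat.eq_zero_or_pos K with hK | hK
  · intro i; exact absurd i.2 (by omega)
  have hne : (Finset.univ : Finset (Fin K)).Nonempty := ⟨⟨0, hK⟩, Finset.mem_univ _⟩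
  set t := Finset.univ.sup' hne (fun k => ηs' k / ηs k) with ht
  by_cases hle : t ≤ 1
  · intro k
    have := Finset.le_sup' (fun k => ηs' k / ηs k) (Finset.mem_univ k)
    have h : ηs' k / ηs k ≤ 1 := le_trans this hle
    calc ηs' k = (ηs' k / ηs k) * ηs k := (div_mul_cancel₀ _ (h1 k).ne').symm
    _ ≤ 1 * ηs k := by nlinarith [h1 k]
    _ = ηs k := one_mul _
  · exfalso
    push_neg at hle
    obtain ⟨j, -, hj⟩ := Finset.exists_mem_eq_sup' hne (fun k => ηs' k / ηs k)
    have hjt : ηs' j = t * ηs j := by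
      rw [ht, hj, div_mul_cancel₀ _ (h1 j).ne']
    have hub : ηs' ≤ t • ηs := by
      intro k
      have := Finset.le_sup' (fun k => ηs' k / ηs k) (Finset.mem_univ k)
      have : ηs' k / ηs k ≤ t := this
      calc ηs' k = (ηs' k / ηs k) * ηs k := (div_mul_cancel₀ _ (h1 k).ne').symm
      _ ≤ t * ηs k := by nlinarith [h1 k]
      _ = (t • ηs) k := rfl
    have hts : ∀ i, 0 ≤ (t • ηs) i := fun i => by
      have := h1 i; simp only [Pi.smul_apply, smul_eq_mul]; nlinarith
    have hm := hmono ηs' (t • ηs) h2 hts hub j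
    have hs := hscal t hle ηs (fun i => (h1 i).le) j
    rw [hf2, hf1] at *
    linarith [hm, hs, hjt ▸ hm]

/-- A standard interference mapping `T : ℝ≥0^K → ℝ>0^K` (positive, monotone, scalable)
has at most one fixed point. -/
theorem stmt10 {K : ℕ} (T : (Fin K → ℝ) → (Fin K → ℝ))
    (hpos : ∀ η, (∀ i, 0 ≤ η i) → ∀ k, 0 < T η k)
    (hmono : ∀ η η', (∀ i, 0 ≤ η i) → (∀ i, 0 ≤ η' i) → η ≤ η' → T η ≤ T η')
    (hscal : ∀ t : ℝ, 1 < t → ∀ η, (∀ i, 0 ≤ η i) → ∀ k, T (t • η) k < t * T η k)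
    (ηs ηs' : Fin K → ℝ) (h1 : ∀ i, 0 ≤ ηs i) (h2 : ∀ i, 0 ≤ ηs' i)
    (hf1 : T ηs = ηs) (hf2 : T ηs' = ηs') : ηs = ηs' := by
  have hp1 : ∀ i, 0 < ηs i := fun i => hf1 ▸ hpos ηs h1 i
  have hp2 : ∀ i, 0 < ηs' i := fun i => hf2 ▸ hpos ηs' h2 i
  exact le_antisymm (aux10 T hmono hscal ηs' ηs hp2 h1 hf2 hf1)
    (aux10 T hmono hscal ηs ηs' hp1 h2 hf1 hf2)
end

section
/- In the fixed-point update of Algorithm 1, if the previous iterate satisfies 0 < η^{(j-1)}_i ≤ ρ_u for all i, then the updated coefficient η_k^{(j)} = 1/(g_k^H (C_k^{(j-1)})^{-1} g_k) satisfies η_k^{(j)} ≥ 1/(g_k^H F_k^{-1} g_k) > 0, where C_k^{(j-1)} = Σ_i η_i^{(j-1)} A_{ki} − η_k^{(j-1)} g_k g_k^H + F_k with A_{ki} ⪰ 0, A_{kk} ⪰ g_k g_k^H, F_k ≻ 0, and g_k ≠ 0. -/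
open Matrix ComplexOrder

variable {n : ℕ}

lemma smul_psd' {r : ℝ} (hr : 0 ≤ r) {M : Matrix (Fin n) (Fin n) ℂ} (hM : M.PosSemidef) :
    ((r : ℂ) • M).PosSemidef := by
  refine Matrix.PosSemidef.of_dotProduct_mulVec_nonneg ?_ (fun x => ?_)
  · unfold Matrix.IsHermitian
    rw [conjTranspose_smul, hM.1.eq]
    norm_num
  · rw [smul_mulVec, dotProduct_smul, smul_eq_mul]
    exact mul_nonneg (by exact_mod_cast hr) (hM.dotProduct_mulVec_nonneg x)

lemma key' {F C : Matrix (Fin n) (Fin n) ℂ} (hF : F.PosDef) (hC : C.PosDef)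
    (hCF : (C - F).PosSemidef) (g : Fin n → ℂ) :
    (star g ⬝ᵥ C⁻¹ *ᵥ g).re ≤ (star g ⬝ᵥ F⁻¹ *ᵥ g).re := by
  set x := C⁻¹ *ᵥ g with hx
  set y := F⁻¹ *ᵥ g with hy
  have hCx : C *ᵥ x = g := by
    rw [hx, mulVec_mulVec, Matrix.mul_nonsing_inv _ ((Matrix.isUnit_iff_isUnit_det C).mp hC.isUnit),
      one_mulVec]
  have hFy : F *ᵥ y = g := by
    rw [hy, mulVec_mulVec, Matrix.mul_nonsing_inv _ ((Matrix.isUnit_iff_isUnit_det F).mp hF.isUnit),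
      one_mulVec]
  have hsq : star g ⬝ᵥ x = star x ⬝ᵥ C *ᵥ x := by
    conv_lhs => rw [← hCx]
    rw [star_mulVec, ← dotProduct_mulVec, hC.isHermitian.eq]
  have htp : star g ⬝ᵥ y = star y ⬝ᵥ F *ᵥ y := by
    conv_lhs => rw [← hFy]
    rw [star_mulVec, ← dotProduct_mulVec, hF.isHermitian.eq]
  have hq0 : 0 ≤ star x ⬝ᵥ C *ᵥ x := hC.posSemidef.dotProduct_mulVec_nonneg x
  have hp0 : 0 ≤ star y ⬝ᵥ F *ᵥ y := hF.posSemidef.dotProduct_mulVec_nonneg y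
  letI c : PreInnerProductSpace.Core ℂ (Fin n → ℂ) :=
    { inner := fun a b => star a ⬝ᵥ F *ᵥ b
      conj_inner_symm := fun a b => by
        show starRingEnd ℂ (star b ⬝ᵥ F *ᵥ a) = star a ⬝ᵥ F *ᵥ b
        rw [star_dotProduct, starRingEnd_apply, star_star, star_mulVec, dotProduct_mulVec,
          hF.isHermitian.eq]
      re_inner_nonneg := fun a => hF.posSemidef.re_dotProduct_nonneg a
      add_left := by simp only [star_add, add_dotProduct, forall_const, implies_true]
      smul_left := fun a b r => by
        show star (r • a) ⬝ᵥ F *ᵥ b = starRingEnd ℂ r * (star a ⬝ᵥ F *ᵥ b)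
        rw [← smul_eq_mul, ← smul_dotProduct, starRingEnd_apply, ← star_smul] }
  letI : Inner ℂ (Fin n → ℂ) := c.toInner
  have hcs := InnerProductSpace.Core.inner_mul_inner_self_le (𝕜 := ℂ) x y
  have hixy : (inner ℂ x y : ℂ) = star x ⬝ᵥ C *ᵥ x := by
    show star x ⬝ᵥ F *ᵥ y = _
    rw [hFy]
    conv_lhs => rw [← hCx]
  have hiyx : (inner ℂ y x : ℂ) = starRingEnd ℂ (star x ⬝ᵥ C *ᵥ x) := by
    rw [← hixy, ← c.conj_inner_symm x y, starRingEnd_self_apply]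
  have hixx : (inner ℂ x x : ℂ) = star x ⬝ᵥ F *ᵥ x := rfl
  have hiyy : (inner ℂ y y : ℂ) = star y ⬝ᵥ F *ᵥ y := rfl
  rw [hixy, hiyx, hixx, hiyy] at hcs
  -- q is a nonneg real
  set q := star x ⬝ᵥ C *ᵥ x with hqdef
  have hqre : q = (q.re : ℂ) := by
    have h := (Complex.le_def.mp hq0).2
    apply Complex.ext <;> simp [← h]
  have hqre0 : 0 ≤ q.re := (Complex.le_def.mp hq0).1
  have hnq : ‖q‖ = q.re := by
    rw [hqre]; simp [abs_of_nonneg hqre0]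
  rw [RCLike.norm_conj, hnq] at hcs
  simp only [RCLike.re_to_complex] at hcs
  -- bound re (x F x) by q.re
  have hsub : (star x ⬝ᵥ F *ᵥ x).re ≤ q.re := by
    have h0 := hCF.re_dotProduct_nonneg x
    rw [sub_mulVec, dotProduct_sub] at h0
    simp only [RCLike.re_to_complex, Complex.sub_re] at h0
    linarith
  have hFx0 : 0 ≤ (star x ⬝ᵥ F *ᵥ x).re := hF.posSemidef.re_dotProduct_nonneg x
  have hFy0 : 0 ≤ (star y ⬝ᵥ F *ᵥ y).re := hF.posSemidef.re_dotProduct_nonneg y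
  rw [hsq, htp]
  -- now: q.re * q.re ≤ re(xFx) * re(yFy) ≤ q.re * re(yFy)
  rcases eq_or_lt_of_le hqre0 with h | h
  · rw [← h]; exact hFy0
  · nlinarith [mul_le_mul_of_nonneg_right hsub hFy0]

lemma CF_psd' {K : ℕ} (ρu : ℝ) (g : Fin n → ℂ)
    (A : Fin K → Matrix (Fin n) (Fin n) ℂ) (hA : ∀ i, (A i).PosSemidef)
    (k : Fin K) (hAkk : (A k - vecMulVec g (star g)).PosSemidef)
    (η : Fin K → ℝ) (hη : ∀ i, 0 < η i ∧ η i ≤ ρu) :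
    ((∑ i, (η i : ℂ) • A i) - (η k : ℂ) • vecMulVec g (star g)).PosSemidef := by
  have hsum : (∑ i, (η i : ℂ) • A i)
      = (η k : ℂ) • A k + ∑ i ∈ Finset.univ.erase k, (η i : ℂ) • A i :=
    (Finset.add_sum_erase _ _ (Finset.mem_univ k)).symm
  rw [hsum, add_sub_right_comm, ← smul_sub]
  refine Matrix.PosSemidef.add (smul_psd' (hη k).1.le hAkk) ?_
  refine Finset.sum_induction _ Matrix.PosSemidef
    (fun a b ha hb => ha.add hb) Matrix.PosSemidef.zero ?_
  exact fun i _ => smul_psd' (hη i).1.le (hA i)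

/-- In the fixed-point update of Algorithm 1, if `0 < η_i ≤ ρ_u` for all `i`, then the
updated coefficient `1/(g_kᴴ (C_k)⁻¹ g_k)` is bounded below by `1/(g_kᴴ F_k⁻¹ g_k) > 0`,
where `C_k = Σᵢ ηᵢ A_{ki} − η_k g_k g_kᴴ + F_k`. -/
theorem stmt19 {n K : ℕ} (ρu : ℝ) (hρu : 0 < ρu)
    (g : Fin n → ℂ) (hg : g ≠ 0)
    (A : Fin K → Matrix (Fin n) (Fin n) ℂ) (hA : ∀ i, (A i).PosSemidef)
    (k : Fin K) (hAkk : (A k - vecMulVec g (star g)).PosSemidef)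
    (F : Matrix (Fin n) (Fin n) ℂ) (hF : F.PosDef)
    (η : Fin K → ℝ) (hη : ∀ i, 0 < η i ∧ η i ≤ ρu)
    (C : Matrix (Fin n) (Fin n) ℂ)
    (hCdef : C = (∑ i, (η i : ℂ) • A i) - (η k : ℂ) • vecMulVec g (star g) + F) :
    1 / (star g ⬝ᵥ F⁻¹.mulVec g).re ≤ 1 / (star g ⬝ᵥ C⁻¹.mulVec g).re ∧
    0 < 1 / (star g ⬝ᵥ F⁻¹.mulVec g).re := by
  have hpsd := CF_psd' ρu g A hA k hAkk η hη
  have hCF : (C - F).PosSemidef := by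
    rw [hCdef, add_sub_cancel_right]
    exact hpsd
  have hC : C.PosDef := by
    rw [hCdef]
    exact Matrix.PosDef.posSemidef_add hpsd hF
  have hkey := key' hF hC hCF g
  have hs : 0 < (star g ⬝ᵥ C⁻¹ *ᵥ g).re := by
    have := hC.inv.re_dotProduct_pos hg
    simpa only [RCLike.re_to_complex] using this
  have ht : 0 < (star g ⬝ᵥ F⁻¹ *ᵥ g).re := by
    have := hF.inv.re_dotProduct_pos hg
    simpa only [RCLike.re_to_complex] using this
  exact ⟨one_div_le_one_div_of_le hs hkey, by positivity⟩
end
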